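/- Let Y₁ and Y₂ be two channels with common finite input alphabet X. Then Y₂ is less noisy than Y₁ (i.e., I(U;Y₂) ≥ I(U;Y₁) for all Markov chains U → X → (Y₁,Y₂)) if and only if the function p(x) ↦ I(X;Y₁) - I(X;Y₂) is convex on the simplex of input distributions. -/

import Mathlib

open Real

/-- Mutual information (in bits) of a joint pmf `q` on a product of finite alphabets,
with the conventions `log 0 = 0`, `x / 0 = 0`. -/
noncomputable def mutualInfo {A B : Type*} [Fintype A] [Fintype B] (q : A → B → ℝ) : ℝ :=
  ∑ a, ∑ b, q a b * Real.logb 2 (q a b / ((∑ b', q a b') * (∑ a', q a' b)))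

/-- Conditional mutual information `I(A;B|U)` (in bits) of a joint pmf `r` on `U × A × B`. -/
noncomputable def condMutualInfo {U A B : Type*} [Fintype U] [Fintype A] [Fintype B]
    (r : U → A → B → ℝ) : ℝ :=
  ∑ u, ∑ a, ∑ b, r u a b *
    Real.logb 2 ((r u a b * (∑ a', ∑ b', r u a' b')) / ((∑ b', r u a b') * (∑ a', r u a' b)))

lemma chainRule {k m n : ℕ} (q : Fin k → Fin m → ℝ) (W : Fin m → Fin n → ℝ)
    (hq : ∀ u x, 0 ≤ q u x) (hW : ∀ x y, 0 ≤ W x y) (hWs : ∀ x, ∑ y, W x y = 1) :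
    mutualInfo (fun u y => ∑ x, q u x * W x y)
      = mutualInfo (fun x y => (∑ u, q u x) * W x y)
        - condMutualInfo (fun u x y => q u x * W x y) := by
  have hrow : ∀ u, ∑ y, ∑ x, q u x * W x y = ∑ x, q u x := by
    intro u; rw [Finset.sum_comm]; simp [← Finset.mul_sum, hWs]
  have hcol : ∀ y, ∑ u, ∑ x, q u x * W x y = ∑ x, (∑ u, q u x) * W x y := by
    intro y; rw [Finset.sum_comm]; simp [Finset.sum_mul]
  have hProw : ∀ x, ∑ y, (∑ u, q u x) * W x y = ∑ u, q u x := by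
    intro x; rw [← Finset.mul_sum, hWs, mul_one]
  have hqrow : ∀ u x, ∑ y, q u x * W x y = q u x := by
    intro u x; rw [← Finset.mul_sum, hWs, mul_one]
  simp only [mutualInfo, condMutualInfo]
  simp only [hrow, hcol, hProw, hqrow]
  -- now express LHS and middle as triple sums over u, x, y
  have lhs_eq : ∀ u, ∑ y, (∑ x, q u x * W x y) *
        logb 2 ((∑ x, q u x * W x y) / ((∑ x, q u x) * (∑ x, (∑ u', q u' x) * W x y)))
      = ∑ x, ∑ y, (q u x * W x y) *
        logb 2 ((∑ x', q u x' * W x' y) / ((∑ x', q u x') * (∑ x', (∑ u', q u' x') * W x' y))) := by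
    intro u; rw [Finset.sum_comm]
    exact Finset.sum_congr rfl fun y _ => by rw [Finset.sum_mul]
  have mid_eq : ∑ x, ∑ y, ((∑ u, q u x) * W x y) *
        logb 2 (((∑ u, q u x) * W x y) / ((∑ u, q u x) * (∑ x', (∑ u', q u' x') * W x' y)))
      = ∑ u, ∑ x, ∑ y, (q u x * W x y) *
        logb 2 (((∑ u', q u' x) * W x y) / ((∑ u', q u' x) * (∑ x', (∑ u', q u' x') * W x' y))) := by
    trans (∑ x, ∑ u, ∑ y, (q u x * W x y) *
        logb 2 (((∑ u', q u' x) * W x y) / ((∑ u', q u' x) * (∑ x', (∑ u', q u' x') * W x' y))))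
    · refine Finset.sum_congr rfl fun x _ => ?_
      rw [Finset.sum_comm]
      refine Finset.sum_congr rfl fun y _ => ?_
      rw [Finset.sum_mul, Finset.sum_mul]
    · exact Finset.sum_comm
  simp only [lhs_eq]
  rw [mid_eq, ← Finset.sum_sub_distrib]
  refine Finset.sum_congr rfl fun u _ => ?_
  rw [← Finset.sum_sub_distrib]
  refine Finset.sum_congr rfl fun x _ => ?_
  rw [← Finset.sum_sub_distrib]
  refine Finset.sum_congr rfl fun y _ => ?_
  rw [← mul_sub]
  rcases eq_or_lt_of_le (mul_nonneg (hq u x) (hW x y)) with h | h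
  · rw [← h, zero_mul, zero_mul]
  have hqx : 0 < q u x := by
    rcases (hq u x).lt_or_eq with h' | h'
    · exact h'
    · exfalso; rw [← h', zero_mul] at h; exact lt_irrefl 0 h
  have hWxy : 0 < W x y := by
    rcases (hW x y).lt_or_eq with h' | h'
    · exact h'
    · exfalso; rw [← h', mul_zero] at h; exact lt_irrefl 0 h
  have hpU : 0 < ∑ x', q u x' :=
    lt_of_lt_of_le hqx (Finset.single_le_sum (fun i _ => hq u i) (Finset.mem_univ x))
  have hpX : 0 < ∑ u', q u' x :=
    lt_of_lt_of_le hqx (Finset.single_le_sum (fun i _ => hq i x) (Finset.mem_univ u))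
  have hQ : 0 < ∑ x', q u x' * W x' y :=
    lt_of_lt_of_le h (Finset.single_le_sum (fun i _ => mul_nonneg (hq u i) (hW i y)) (Finset.mem_univ x))
  have hPY : 0 < ∑ x', (∑ u', q u' x') * W x' y := by
    refine lt_of_lt_of_le (mul_pos hpX hWxy)
      (Finset.single_le_sum (f := fun i => (∑ u', q u' i) * W i y)
        (fun i _ => mul_nonneg (Finset.sum_nonneg fun j _ => hq j i) (hW i y)) (Finset.mem_univ x))
  congr 1
  rw [← Real.logb_div (by positivity) (by positivity)]
  congr 1
  field_simp

lemma condDecomp {k m n : ℕ} (w : Fin k → ℝ) (z : Fin k → Fin m → ℝ) (W : Fin m → Fin n → ℝ)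
    (hw : ∀ u, 0 ≤ w u) (hzs : ∀ u, ∑ x, z u x = 1) (hWs : ∀ x, ∑ y, W x y = 1) :
    condMutualInfo (fun u x y => w u * z u x * W x y)
      = ∑ u, w u * mutualInfo (fun x y => z u x * W x y) := by
  simp only [condMutualInfo, mutualInfo]
  refine Finset.sum_congr rfl fun u _ => ?_
  rcases (hw u).lt_or_eq with hwu | hwu
  · -- w u > 0
    have htot : ∑ x, w u * z u x = w u := by
      rw [← Finset.mul_sum, hzs u, mul_one]
    have hrow : ∀ x, ∑ y, w u * z u x * W x y = w u * z u x := by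
      intro x; simp [mul_assoc, ← Finset.mul_sum, hWs]
    have hzrow : ∀ x, ∑ y, z u x * W x y = z u x := by
      intro x; simp [← Finset.mul_sum, hWs]
    have hcol : ∀ y, ∑ x, w u * z u x * W x y = w u * ∑ x, z u x * W x y := by
      intro y; simp [mul_assoc, ← Finset.mul_sum]
    simp only [hrow, hzrow, hcol, htot]
    rw [Finset.mul_sum]
    refine Finset.sum_congr rfl fun x _ => ?_
    rw [Finset.mul_sum]
    refine Finset.sum_congr rfl fun y _ => ?_
    have harg : (w u * z u x * W x y * w u) / ((w u * z u x) * (w u * ∑ x', z u x' * W x' y))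
        = (z u x * W x y) / (z u x * ∑ x', z u x' * W x' y) := by
      rw [show w u * z u x * W x y * w u = (w u * w u) * (z u x * W x y) by ring,
          show (w u * z u x) * (w u * ∑ x', z u x' * W x' y)
            = (w u * w u) * (z u x * ∑ x', z u x' * W x' y) by ring,
          mul_div_mul_left _ _ (by positivity)]
    rw [harg]; ring
  · -- w u = 0
    rw [← hwu]
    simp

/-- Y₂ is less noisy than Y₁ iff p ↦ I(X;Y₁) - I(X;Y₂) is convex on the input simplex. -/
theorem stmt14 {m n₁ n₂ : ℕ} (W₁ : Fin m → Fin n₁ → ℝ) (W₂ : Fin m → Fin n₂ → ℝ)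
    (hW₁ : ∀ x y, 0 ≤ W₁ x y) (hW₁s : ∀ x, ∑ y, W₁ x y = 1)
    (hW₂ : ∀ x y, 0 ≤ W₂ x y) (hW₂s : ∀ x, ∑ y, W₂ x y = 1) :
    (∀ (k : ℕ) (q : Fin k → Fin m → ℝ), (∀ u x, 0 ≤ q u x) → (∑ u, ∑ x, q u x) = 1 →
        mutualInfo (fun u y₁ => ∑ x, q u x * W₁ x y₁)
          ≤ mutualInfo (fun u y₂ => ∑ x, q u x * W₂ x y₂)) ↔
    ConvexOn ℝ {p : Fin m → ℝ | (∀ x, 0 ≤ p x) ∧ ∑ x, p x = 1}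
      (fun p => mutualInfo (fun x y₁ => p x * W₁ x y₁)
        - mutualInfo (fun x y₂ => p x * W₂ x y₂)) := by
  constructor
  · -- less noisy → convex
    intro h
    refine ⟨convex_stdSimplex ℝ (Fin m), ?_⟩
    rintro p ⟨hp1, hp2⟩ p' ⟨hp1', hp2'⟩ a b ha hb hab
    have hq : ∀ (u : Fin 2) x, 0 ≤ ![a, b] u * ![p, p'] u x := by
      intro u x
      fin_cases u
      · simpa using mul_nonneg ha (hp1 x)
      · simpa using mul_nonneg hb (hp1' x)
    have hqs : ∑ u : Fin 2, ∑ x, ![a, b] u * ![p, p'] u x = 1 := by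
      simp [Fin.sum_univ_two, ← Finset.mul_sum, hp2, hp2', hab]
    have key := h 2 (fun u x => ![a, b] u * ![p, p'] u x) hq hqs
    have hc1 := chainRule (fun u x => ![a, b] u * ![p, p'] u x) W₁ hq hW₁ hW₁s
    have hc2 := chainRule (fun u x => ![a, b] u * ![p, p'] u x) W₂ hq hW₂ hW₂s
    have hzs : ∀ u : Fin 2, ∑ x, ![p, p'] u x = 1 := by
      intro u; fin_cases u <;> simpa [hp2, hp2']
    have hw0 : ∀ u : Fin 2, 0 ≤ ![a, b] u := by
      intro u; fin_cases u <;> simpa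
    have hd1 := condDecomp ![a, b] ![p, p'] W₁ hw0 hzs hW₁s
    have hd2 := condDecomp ![a, b] ![p, p'] W₂ hw0 hzs hW₂s
    simp only [Fin.sum_univ_two, Matrix.cons_val_zero, Matrix.cons_val_one, Matrix.head_cons,
      Pi.add_apply, Pi.smul_apply, smul_eq_mul] at key hc1 hc2 hd1 hd2 ⊢
    linarith
  · -- convex → less noisy
    intro hconv k q hq hqs
    rcases Nat.eq_zero_or_pos m with rfl | hm
    · simp at hqs
    have hw0 : ∀ u, 0 ≤ ∑ x, q u x := fun u => Finset.sum_nonneg fun x _ => hq u x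
    set z : Fin k → Fin m → ℝ := fun u =>
      if (∑ x, q u x) = 0 then (fun x => if x = ⟨0, hm⟩ then 1 else 0)
      else fun x => q u x / (∑ x', q u x') with hzdef
    have hz1 : ∀ u x, 0 ≤ z u x := by
      intro u x
      rw [hzdef]
      dsimp only
      split
      · dsimp only; split <;> norm_num
      · exact div_nonneg (hq u x) (hw0 u)
    have hzs : ∀ u, ∑ x, z u x = 1 := by
      intro u
      rw [hzdef]
      dsimp only
      split
      · rw [Finset.sum_ite_eq' Finset.univ (⟨0, hm⟩ : Fin m) (fun _ => (1:ℝ))]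
        simp
      · rw [← Finset.sum_div, div_self (by assumption)]
    have hdecomp : ∀ u x, q u x = (∑ x', q u x') * z u x := by
      intro u x
      rw [hzdef]
      dsimp only
      split
      · rename_i h0
        have : q u x = 0 :=
          (Finset.sum_eq_zero_iff_of_nonneg (fun i _ => hq u i)).1 h0 x (Finset.mem_univ x)
        rw [this, h0, zero_mul]
      · rw [mul_div_cancel₀ _ (by assumption)]
    have hc1 := chainRule q W₁ hq hW₁ hW₁s
    have hc2 := chainRule q W₂ hq hW₂ hW₂s
    have hrw : (fun u x y => q u x * W₁ x y) = (fun u x y => (∑ x', q u x') * z u x * W₁ x y) := by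
      funext u x y; rw [← hdecomp]
    have hrw2 : (fun u x y => q u x * W₂ x y) = (fun u x y => (∑ x', q u x') * z u x * W₂ x y) := by
      funext u x y; rw [← hdecomp]
    have hd1 : condMutualInfo (fun u x y => q u x * W₁ x y)
        = ∑ u, (∑ x', q u x') * mutualInfo (fun x y => z u x * W₁ x y) := by
      rw [hrw]; exact condDecomp _ z W₁ hw0 hzs hW₁s
    have hd2 : condMutualInfo (fun u x y => q u x * W₂ x y)
        = ∑ u, (∑ x', q u x') * mutualInfo (fun x y => z u x * W₂ x y) := by
      rw [hrw2]; exact condDecomp _ z W₂ hw0 hzs hW₂s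
    have hj := hconv.map_sum_le (t := Finset.univ) (w := fun u => ∑ x, q u x) (p := z)
      (fun u _ => hw0 u) hqs (fun u _ => ⟨hz1 u, hzs u⟩)
    have hsum : ∑ u, (∑ x, q u x) • z u = (fun x => ∑ u, q u x) := by
      funext x
      rw [Finset.sum_apply]
      exact Finset.sum_congr rfl fun u _ => by rw [Pi.smul_apply, smul_eq_mul, ← hdecomp]
    rw [hsum] at hj
    simp only [smul_eq_mul, mul_sub] at hj
    rw [Finset.sum_sub_distrib] at hj
    linarith
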